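/- Assume c_k > 0 for all k ≠ i. If s ∈ ℝⁿ satisfies s_k ≥ 0 for all k ≠ i and Σ_{k=1}^n s_k = 0, then sup_{φ ∈ ℝⁿ} (Σ_{k=1}^n s_k·φ_k − G(φ)) = Σ_{k ≠ i} c_k·((h·s_k/c_k)·log(h·s_k/c_k) − h·s_k/c_k + 1), with the convention 0·log 0 := 0; moreover this value is finite and nonnegative. -/

import Mathlib

open scoped BigOperators

noncomputable section

lemma leg_key (c t x : ℝ) (hc : 0 < c) (ht : 0 ≤ t) :
    c * (t * x - (Real.exp x - 1)) ≤ c * (t * Real.log t - t + 1) := by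
  rcases eq_or_lt_of_le ht with h0 | h0
  · subst h0
    simp only [zero_mul, zero_sub, Real.log_zero, mul_zero, sub_zero, zero_add]
    have := Real.exp_pos x
    nlinarith
  · have h1 : t * Real.exp (x - Real.log t) = Real.exp x := by
      rw [Real.exp_sub, Real.exp_log h0]
      field_simp
    have h2 := Real.add_one_le_exp (x - Real.log t)
    nlinarith [mul_le_mul_of_nonneg_left h2 (le_of_lt h0)]


/-- `G(φ) = Σ_{k ≠ i} c_k·(exp((φ_k − φ_i)/h) − 1)`. -/
def legG {n : ℕ} (h : ℝ) (i : Fin n) (c : Fin n → ℝ) (φ : Fin n → ℝ) : ℝ :=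
  ∑ k ∈ Finset.univ.erase i, c k * (Real.exp ((φ k - φ i) / h) - 1)

/-- If `c_k > 0` for all `k ≠ i`, `s_k ≥ 0` for all `k ≠ i` and `Σ s_k = 0`, then
the Legendre transform `sup_φ (Σ s_k φ_k − G(φ))` equals
`Σ_{k ≠ i} c_k·((h s_k/c_k)·log(h s_k/c_k) − h s_k/c_k + 1)`
(with `0·log 0 = 0`, which holds by convention for `Real.log 0 = 0`); this value is
a finite least upper bound and it is nonnegative. -/
theorem legendre_transform_value
    {n : ℕ} (hn : 2 ≤ n) (i : Fin n) (h : ℝ) (hh : 0 < h)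
    (c : Fin n → ℝ) (hc : ∀ k, k ≠ i → 0 < c k)
    (s : Fin n → ℝ) (hs0 : ∀ k, k ≠ i → 0 ≤ s k) (hsum : ∑ k, s k = 0) :
    IsLUB (Set.range fun φ : Fin n → ℝ => (∑ k, s k * φ k) - legG h i c φ)
        (∑ k ∈ Finset.univ.erase i,
          c k * ((h * s k / c k) * Real.log (h * s k / c k) - h * s k / c k + 1)) ∧
    0 ≤ ∑ k ∈ Finset.univ.erase i,
          c k * ((h * s k / c k) * Real.log (h * s k / c k) - h * s k / c k + 1) := by
  set E := Finset.univ.erase i with hEdef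
  have hne : ∀ k ∈ E, k ≠ i := fun k hk => Finset.ne_of_mem_erase hk
  have hcE : ∀ k ∈ E, 0 < c k := fun k hk => hc k (hne k hk)
  have hsE : ∀ k ∈ E, 0 ≤ s k := fun k hk => hs0 k (hne k hk)
  have hsumE : ∑ k ∈ E, s k = - s i := by
    have h1 : ∑ k ∈ E, s k + s i = ∑ k, s k :=
      Finset.sum_erase_add Finset.univ s (Finset.mem_univ i)
    rw [hsum] at h1; linarith
  -- rewrite the objective
  have hval : ∀ φ : Fin n → ℝ, (∑ k, s k * φ k) - legG h i c φ
      = ∑ k ∈ E, (s k * (φ k - φ i) - c k * (Real.exp ((φ k - φ i) / h) - 1)) := by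
    intro φ
    have h1 : ∑ k ∈ E, s k * φ k + s i * φ i = ∑ k, s k * φ k :=
      Finset.sum_erase_add Finset.univ _ (Finset.mem_univ i)
    have h2 : ∑ k ∈ E, s k * (φ k - φ i)
        = ∑ k ∈ E, s k * φ k - (∑ k ∈ E, s k) * φ i := by
      rw [Finset.sum_mul, ← Finset.sum_sub_distrib]
      exact Finset.sum_congr rfl (fun k _ => by ring)
    rw [Finset.sum_sub_distrib, h2, hsumE, legG, ← h1]
    ring
  set S := ∑ k ∈ E, c k * ((h * s k / c k) * Real.log (h * s k / c k) - h * s k / c k + 1)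
    with hSdef
  -- per-term identity used to apply leg_key
  have hterm : ∀ k ∈ E, ∀ y : ℝ,
      s k * y - c k * (Real.exp (y / h) - 1)
        = c k * ((h * s k / c k) * (y / h) - (Real.exp (y / h) - 1)) := by
    intro k hk y
    have hck := (hcE k hk).ne'
    field_simp
  have hub : ∀ φ : Fin n → ℝ, (∑ k, s k * φ k) - legG h i c φ ≤ S := by
    intro φ
    rw [hval]
    apply Finset.sum_le_sum
    intro k hk
    rw [hterm k hk (φ k - φ i)]
    have ht : 0 ≤ h * s k / c k := div_nonneg (mul_nonneg hh.le (hsE k hk)) (hcE k hk).le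
    exact leg_key (c k) (h * s k / c k) ((φ k - φ i) / h) (hcE k hk) ht
  have hub' : S ∈ upperBounds
      (Set.range fun φ : Fin n → ℝ => (∑ k, s k * φ k) - legG h i c φ) := by
    rintro v ⟨φ, rfl⟩; exact hub φ
  have hEne : E.Nonempty := by
    rw [← Finset.card_pos, hEdef, Finset.card_erase_of_mem (Finset.mem_univ i),
      Finset.card_univ, Fintype.card_fin]
    omega
  have hCpos : 0 < ∑ k ∈ E, c k := Finset.sum_pos hcE hEne
  set C := ∑ k ∈ E, c k with hCdef
  constructor
  · refine ⟨hub', ?_⟩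
    intro b hb
    apply le_of_forall_sub_le
    intro ε hε
    set M : ℝ := - Real.log (ε / C) with hMdef
    have hexpM : Real.exp (-M) = ε / C := by
      rw [hMdef, neg_neg, Real.exp_log (by positivity)]
    -- the approximating point
    set φ : Fin n → ℝ := fun k =>
      if k = i then 0 else (if s k = 0 then -(M * h) else h * Real.log (h * s k / c k))
      with hφdef
    have hφi : φ i = 0 := by simp [hφdef]
    have hval2 : S - (∑ k, s k * φ k) - legG h i c φ ≤ ε → True := fun _ => trivial
    have key2 : S - ((∑ k, s k * φ k) - legG h i c φ) ≤ ε := by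
      rw [hval φ, hSdef, ← Finset.sum_sub_distrib]
      have hbound : ∀ k ∈ E,
          c k * ((h * s k / c k) * Real.log (h * s k / c k) - h * s k / c k + 1)
            - (s k * (φ k - φ i) - c k * (Real.exp ((φ k - φ i) / h) - 1))
            ≤ c k * Real.exp (-M) := by
        intro k hk
        have hki := hne k hk
        have hck := hcE k hk
        rcases eq_or_lt_of_le (hsE k hk) with hs | hs
        · have hφk : φ k = -(M * h) := by simp [hφdef, hki, hs.symm]
          rw [hφk, hφi, ← hs]
          have hx : (-(M * h) - 0) / h = -M := by field_simp; ring
          rw [hx]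
          simp only [mul_zero, zero_div, zero_mul, zero_sub, zero_add, mul_one,
            sub_zero, zero_mul]
          have := Real.exp_pos (-M)
          nlinarith
        · have hts : 0 < h * s k / c k := by positivity
          have hφk : φ k = h * Real.log (h * s k / c k) := by
            simp [hφdef, hki, hs.ne']
          rw [hφk, hφi]
          have hx : (h * Real.log (h * s k / c k) - 0) / h = Real.log (h * s k / c k) := by
            field_simp; ring
          rw [hx, Real.exp_log hts]
          have hrw : s k * (h * Real.log (h * s k / c k) - 0)
              = c k * ((h * s k / c k) * Real.log (h * s k / c k)) := by
            field_simp; ring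
          rw [hrw]
          have : (0:ℝ) ≤ c k * Real.exp (-M) := by positivity
          nlinarith
      calc ∑ k ∈ E, (c k * ((h * s k / c k) * Real.log (h * s k / c k) - h * s k / c k + 1)
            - (s k * (φ k - φ i) - c k * (Real.exp ((φ k - φ i) / h) - 1)))
          ≤ ∑ k ∈ E, c k * Real.exp (-M) := Finset.sum_le_sum hbound
        _ = C * Real.exp (-M) := by rw [← Finset.sum_mul]
        _ = ε := by rw [hexpM]; field_simp
    have hbφ : (∑ k, s k * φ k) - legG h i c φ ≤ b := hb ⟨φ, rfl⟩
    linarith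
  · have h0 : (0:ℝ) ∈ Set.range fun φ : Fin n → ℝ => (∑ k, s k * φ k) - legG h i c φ := by
      refine ⟨0, ?_⟩
      simp [legG]
    have := hub' h0
    linarith
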